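/- Let K be a field and f, u, v ∈ K with u ≠ 0. Suppose sequences (d_n), (v_n) in K satisfy d_{n+1} + d_n + v_n^2 + f = 0 and u(v_n - v) = -d_n d_{n+1}, with all d_n ≠ 0. Then for all n, d_{n+1} d_{n-1} = (α d_n + β) / d_n^2, where α = u^2 and β = u^2 (v^2 + f), provided additionally that u(X - v) = d_n (X^2 + f) - d_n (X - v_{n-1})(X - v_n) + d_n^2 holds as a polynomial identity in X for each n. -/
import Mathlib


open Polynomial

/-- Proposition 5.1 of the paper: for the genus-1 map, on a fixed level set of the
first integral `H = -u*v`, the quantity `d n` satisfies the symmetric QRT recurrence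
`d (n+1) * d (n-1) = (α * d n + β) / (d n)^2` with `α = u^2`, `β = u^2 * (v^2 + f)`. -/
theorem genus1_qrt {K : Type*} [Field K] (f u v : K) (hu : u ≠ 0)
    (d w : ℤ → K) (hd : ∀ n, d n ≠ 0)
    (h1 : ∀ n : ℤ, d (n + 1) + d n + (w n) ^ 2 + f = 0)
    (h2 : ∀ n : ℤ, u * (w n - v) = -(d n * d (n + 1)))
    (hpoly : ∀ n : ℤ,
      C u * (X - C v) =
        C (d n) * (X ^ 2 + C f) -
          C (d n) * (X - C (w (n - 1))) * (X - C (w n)) + C ((d n) ^ 2)) :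
    ∀ n : ℤ, d (n + 1) * d (n - 1) = (u ^ 2 * d n + u ^ 2 * (v ^ 2 + f)) / (d n) ^ 2 := by
  intro n
  have hp := hpoly n
  have A := congrArg (fun p => p.coeff 1) hp
  have B := congrArg (fun p => p.coeff 0) hp
  simp [coeff_sub, coeff_add, coeff_mul_X, mul_sub, sq, coeff_C_mul, coeff_C] at A B
  have E2 := h2 (n - 1)
  rw [show (n : ℤ) - 1 + 1 = n by ring] at E2
  have E1 := h2 n
  have hn := hd n
  have hdp : d n * d (n + 1) = u * v - u * w n := by linear_combination E1
  have hdm : d n * d (n - 1) = u * v - u * w (n - 1) := by linear_combination E2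
  have key : d n * (d (n + 1) * d (n - 1) * d n ^ 2)
      = d n * (u ^ 2 * d n + u ^ 2 * (v ^ 2 + f)) := by
    linear_combination (d n * d (n - 1) * d n) * hdp + ((u * v - u * w n) * d n) * hdm +
      (u ^ 2 * v) * A + (u ^ 2) * B
  rw [eq_div_iff (pow_ne_zero 2 hn)]
  exact mul_left_cancel₀ hn key
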